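/- arXiv:1703.08778 — 3 statements merged into one kernel-verified Lean document; each statement's English description precedes it below -/
import Mathlib

section
/- If A, B, and A ∪ B are nonempty compact convex subsets of a finite-dimensional real vector space V, then A ∩ B is nonempty and the support function of A ∩ B equals the pointwise minimum of the support functions of A and B: h_{A∩B}(ξ) = min{h_A(ξ), h_B(ξ)} for all ξ in V*. -/
noncomputable def suppFn {V : Type*} [NormedAddCommGroup V] [NormedSpace ℝ V]
    (K : Set V) (ξ : V →L[ℝ] ℝ) : ℝ := sSup (ξ '' K)

lemma seg_meets {V : Type*} [NormedAddCommGroup V] [NormedSpace ℝ V]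
    {A B : Set V} (hAc : IsCompact A) (hBc : IsCompact B)
    (hUconv : Convex ℝ (A ∪ B)) {a b : V} (ha : a ∈ A) (hb : b ∈ B) :
    (segment ℝ a b ∩ (A ∩ B)).Nonempty := by
  have hseg : segment ℝ a b ⊆ A ∪ B :=
    hUconv.segment_subset (Or.inl ha) (Or.inr hb)
  have hconn : IsPreconnected (segment ℝ a b) := (convex_segment a b).isPreconnected
  have := isPreconnected_closed_iff.mp hconn A B hAc.isClosed hBc.isClosed hseg
    ⟨a, left_mem_segment ℝ a b, ha⟩ ⟨b, right_mem_segment ℝ a b, hb⟩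
  exact this

theorem support_function_of_inter {V : Type*} [NormedAddCommGroup V] [NormedSpace ℝ V]
    [FiniteDimensional ℝ V] (A B : Set V)
    (hA : A.Nonempty) (hAc : IsCompact A) (hAconv : Convex ℝ A)
    (hB : B.Nonempty) (hBc : IsCompact B) (hBconv : Convex ℝ B)
    (hUconv : Convex ℝ (A ∪ B)) :
    (A ∩ B).Nonempty ∧
      ∀ ξ : V →L[ℝ] ℝ, suppFn (A ∩ B) ξ = min (suppFn A ξ) (suppFn B ξ) := by
  obtain ⟨a0, ha0⟩ := hA
  obtain ⟨b0, hb0⟩ := hB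
  obtain ⟨x0, _, hx0⟩ := seg_meets hAc hBc hUconv ha0 hb0
  have hne : (A ∩ B).Nonempty := ⟨x0, hx0⟩
  refine ⟨hne, fun ξ => ?_⟩
  -- maximizers
  have hcA : IsCompact (ξ '' A) := hAc.image ξ.continuous
  have hcB : IsCompact (ξ '' B) := hBc.image ξ.continuous
  have hcI : IsCompact (ξ '' (A ∩ B)) := (hAc.inter_right hBc.isClosed).image ξ.continuous
  have hAimne : (ξ '' A).Nonempty := ⟨ξ a0, ⟨a0, ha0, rfl⟩⟩
  have hBimne : (ξ '' B).Nonempty := ⟨ξ b0, ⟨b0, hb0, rfl⟩⟩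
  have hIimne : (ξ '' (A ∩ B)).Nonempty := ⟨ξ x0, ⟨x0, hx0, rfl⟩⟩
  obtain ⟨a, ha, hav⟩ := hcA.sSup_mem hAimne
  obtain ⟨b, hb, hbv⟩ := hcB.sSup_mem hBimne
  have hle : suppFn (A ∩ B) ξ ≤ min (suppFn A ξ) (suppFn B ξ) := by
    refine le_min ?_ ?_
    · exact csSup_le_csSup hcA.bddAbove hIimne (Set.image_mono (f := ξ) Set.inter_subset_left)
    · exact csSup_le_csSup hcB.bddAbove hIimne (Set.image_mono (f := ξ) Set.inter_subset_right)
  refine le_antisymm hle ?_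
  obtain ⟨x, hxseg, hxA, hxB⟩ := seg_meets hAc hBc hUconv ha hb
  obtain ⟨t, s, ht, hs, hts, hx⟩ := hxseg
  have hxval : min (ξ a) (ξ b) ≤ ξ x := by
    have : ξ x = t * ξ a + s * ξ b := by
      rw [← hx]; simp [map_add, map_smul]
    rw [this]
    have h1 := mul_le_mul_of_nonneg_left (min_le_left (ξ a) (ξ b)) ht
    have h2 := mul_le_mul_of_nonneg_left (min_le_right (ξ a) (ξ b)) hs
    have h3 : t * (min (ξ a) (ξ b)) + s * (min (ξ a) (ξ b)) = min (ξ a) (ξ b) := by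
      rw [← add_mul, hts, one_mul]
    linarith
  have hxmem : ξ x ∈ ξ '' (A ∩ B) := ⟨x, ⟨hxA, hxB⟩, rfl⟩
  have : min (suppFn A ξ) (suppFn B ξ) = min (ξ a) (ξ b) := by
    simp [suppFn, hav, hbv]
  rw [this]
  exact hxval.trans (le_csSup hcI.bddAbove hxmem)
end

section
/- For a 2×2 quaternionic Hermitian matrix A = [[a, q],[q̄, b]] with a, b ∈ ℝ and q ∈ ℍ, define det A = ab − q̄q. Then for any 2×2 quaternionic matrix C, det(C*AC) = det(A) · det(C*C), where C* is the conjugate transpose. -/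
open Matrix

/-- Moore determinant of a 2×2 quaternionic Hermitian matrix. -/
noncomputable def moore (M : Matrix (Fin 2) (Fin 2) (Quaternion ℝ)) : ℝ :=
  (M 0 0 * M 1 1 - star (M 0 1) * M 0 1).re

set_option maxHeartbeats 1000000 in
theorem moore_det_weak_multiplicativity (a b : ℝ) (q : Quaternion ℝ)
    (C : Matrix (Fin 2) (Fin 2) (Quaternion ℝ)) :
    moore (Cᴴ * !![(a : Quaternion ℝ), q; star q, (b : Quaternion ℝ)] * C) =
      moore !![(a : Quaternion ℝ), q; star q, (b : Quaternion ℝ)] * moore (Cᴴ * C) := by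
  rw [Matrix.eta_fin_two C]
  obtain ⟨e1,e2,e3,e4⟩ := C 0 0
  obtain ⟨f1,f2,f3,f4⟩ := C 0 1
  obtain ⟨g1,g2,g3,g4⟩ := C 1 0
  obtain ⟨h1,h2,h3,h4⟩ := C 1 1
  simp only [moore, Matrix.mul_apply, Fin.sum_univ_two, Matrix.conjTranspose_apply,
    Matrix.cons_val', Matrix.cons_val_zero, Matrix.cons_val_one, Matrix.head_cons,
    Matrix.head_fin_const, Matrix.empty_val', Matrix.cons_val_fin_one, Matrix.of_apply,
    Quaternion.re_mul, Quaternion.imI_mul, Quaternion.imJ_mul, Quaternion.imK_mul,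
    Quaternion.re_sub, Quaternion.re_add, Quaternion.imI_add, Quaternion.imJ_add,
    Quaternion.imK_add, Quaternion.imI_sub, Quaternion.imJ_sub, Quaternion.imK_sub,
    Quaternion.re_star, Quaternion.imI_star, Quaternion.imJ_star, Quaternion.imK_star,
    Quaternion.re_coe, Quaternion.imI_coe, Quaternion.imJ_coe, Quaternion.imK_coe]
  simp only [Matrix.cons_val, Quaternion.re_star, Quaternion.imI_star, Quaternion.imJ_star, Quaternion.imK_star]
  ring
end

section
/- The pointwise minimum operation preserves the valuation identity for support functions: if A, B, and A ∪ B are nonempty compact convex subsets of ℝ^n, then max{h_A, h_B} is a convex (indeed sublinear) function and min{h_A, h_B} is convex, being the support function of A ∩ B. -/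
noncomputable def suppFnE {n : ℕ} (K : Set (EuclideanSpace ℝ (Fin n)))
    (x : EuclideanSpace ℝ (Fin n)) : ℝ :=
  sSup ((fun y => (inner ℝ x y : ℝ)) '' K)

lemma suppFnE_exists_max {n : ℕ} {K : Set (EuclideanSpace ℝ (Fin n))}
    (hK : K.Nonempty) (hKc : IsCompact K) (x : EuclideanSpace ℝ (Fin n)) :
    ∃ m ∈ K, suppFnE K x = (inner ℝ x m : ℝ) ∧ ∀ y ∈ K, (inner ℝ x y : ℝ) ≤ inner ℝ x m := by
  obtain ⟨m, hm, hmax⟩ := hKc.exists_isMaxOn (f := fun y => (inner ℝ x y : ℝ)) hK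
    ((continuous_const.inner continuous_id).continuousOn)
  refine ⟨m, hm, ?_, fun y hy => hmax hy⟩
  apply le_antisymm
  · exact csSup_le (hK.image _) (by rintro _ ⟨y, hy, rfl⟩; exact hmax hy)
  · exact le_csSup ⟨inner ℝ x m, by rintro _ ⟨y, hy, rfl⟩; exact hmax hy⟩ ⟨m, hm, rfl⟩

lemma suppFnE_bddAbove {n : ℕ} {K : Set (EuclideanSpace ℝ (Fin n))}
    (hK : K.Nonempty) (hKc : IsCompact K) (x : EuclideanSpace ℝ (Fin n)) :
    BddAbove ((fun y => (inner ℝ x y : ℝ)) '' K) := by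
  obtain ⟨m, _, _, hmax⟩ := suppFnE_exists_max hK hKc x
  exact ⟨inner ℝ x m, by rintro _ ⟨y, hy, rfl⟩; exact hmax y hy⟩

lemma le_suppFnE {n : ℕ} {K : Set (EuclideanSpace ℝ (Fin n))}
    (hK : K.Nonempty) (hKc : IsCompact K) {y : EuclideanSpace ℝ (Fin n)} (hy : y ∈ K)
    (x : EuclideanSpace ℝ (Fin n)) : (inner ℝ x y : ℝ) ≤ suppFnE K x :=
  le_csSup (suppFnE_bddAbove hK hKc x) ⟨y, hy, rfl⟩

lemma suppFnE_convexOn {n : ℕ} {K : Set (EuclideanSpace ℝ (Fin n))}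
    (hK : K.Nonempty) (hKc : IsCompact K) :
    ConvexOn ℝ Set.univ (suppFnE K) := by
  refine ⟨convex_univ, fun x _ y _ a b ha hb hab => ?_⟩
  obtain ⟨m, hm, hval, _⟩ := suppFnE_exists_max hK hKc (a • x + b • y)
  rw [hval, inner_add_left, real_inner_smul_left, real_inner_smul_left]
  exact add_le_add (mul_le_mul_of_nonneg_left (le_suppFnE hK hKc hm x) ha)
    (mul_le_mul_of_nonneg_left (le_suppFnE hK hKc hm y) hb)

lemma suppFnE_smul {n : ℕ} {K : Set (EuclideanSpace ℝ (Fin n))}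
    (hK : K.Nonempty) (hKc : IsCompact K) {c : ℝ} (hc : 0 < c)
    (x : EuclideanSpace ℝ (Fin n)) : suppFnE K (c • x) = c * suppFnE K x := by
  obtain ⟨m, hm, hval, hmax⟩ := suppFnE_exists_max hK hKc x
  obtain ⟨m', hm', hval', _⟩ := suppFnE_exists_max hK hKc (c • x)
  rw [hval, hval']
  apply le_antisymm
  · rw [real_inner_smul_left]
    exact mul_le_mul_of_nonneg_left (hmax m' hm') hc.le
  · calc c * (inner ℝ x m : ℝ) = (inner ℝ (c • x) m : ℝ) := (real_inner_smul_left x m c).symm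
      _ ≤ suppFnE K (c • x) := le_suppFnE hK hKc hm (c • x)
      _ = inner ℝ (c • x) m' := hval'

theorem max_min_of_support_functions {n : ℕ} (A B : Set (EuclideanSpace ℝ (Fin n)))
    (hA : A.Nonempty) (hAc : IsCompact A) (hAconv : Convex ℝ A)
    (hB : B.Nonempty) (hBc : IsCompact B) (hBconv : Convex ℝ B)
    (hUconv : Convex ℝ (A ∪ B)) :
    -- max of the support functions is convex and sublinear (positively 1-homogeneous)
    ConvexOn ℝ Set.univ (fun x => max (suppFnE A x) (suppFnE B x)) ∧
    (∀ (c : ℝ) (x : EuclideanSpace ℝ (Fin n)), 0 < c →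
      max (suppFnE A (c • x)) (suppFnE B (c • x)) =
        c * max (suppFnE A x) (suppFnE B x)) ∧
    -- min of the support functions is convex, being the support function of A ∩ B
    ConvexOn ℝ Set.univ (fun x => min (suppFnE A x) (suppFnE B x)) ∧
    (∀ x, min (suppFnE A x) (suppFnE B x) = suppFnE (A ∩ B) x) := by
  have hIc : IsCompact (A ∩ B) := hAc.inter_right hBc.isClosed
  -- key: for every x, there is z ∈ A ∩ B with min ≤ ⟨x, z⟩
  have key : ∀ x : EuclideanSpace ℝ (Fin n), ∃ z ∈ A ∩ B,
      min (suppFnE A x) (suppFnE B x) ≤ (inner ℝ x z : ℝ) := by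
    intro x
    obtain ⟨a, ha, hvalA, _⟩ := suppFnE_exists_max hA hAc x
    obtain ⟨b, hb, hvalB, _⟩ := suppFnE_exists_max hB hBc x
    have hseg : segment ℝ a b ⊆ A ∪ B :=
      hUconv.segment_subset (Or.inl ha) (Or.inr hb)
    have hconn : IsPreconnected (segment ℝ a b) := (convex_segment a b).isPreconnected
    have hne : (segment ℝ a b ∩ (A ∩ B)).Nonempty :=
      isPreconnected_closed_iff.mp hconn A B hAc.isClosed hBc.isClosed hseg
        ⟨a, left_mem_segment ℝ a b, ha⟩ ⟨b, right_mem_segment ℝ a b, hb⟩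
    obtain ⟨z, hzseg, hzA, hzB⟩ := hne
    refine ⟨z, ⟨hzA, hzB⟩, ?_⟩
    obtain ⟨u, v, hu, hv, huv, hz⟩ := hzseg
    have hz' : (inner ℝ x z : ℝ) = u * inner ℝ x a + v * inner ℝ x b := by
      rw [← hz, inner_add_right, real_inner_smul_right, real_inner_smul_right]
    rw [hz', ← hvalA, ← hvalB]
    calc min (suppFnE A x) (suppFnE B x)
        = (u + v) * min (suppFnE A x) (suppFnE B x) := by rw [huv, one_mul]
      _ = u * min (suppFnE A x) (suppFnE B x) + v * min (suppFnE A x) (suppFnE B x) := by ring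
      _ ≤ u * suppFnE A x + v * suppFnE B x :=
          add_le_add (mul_le_mul_of_nonneg_left (min_le_left _ _) hu)
            (mul_le_mul_of_nonneg_left (min_le_right _ _) hv)
  have hI : (A ∩ B).Nonempty := by
    obtain ⟨z, hz, _⟩ := key 0
    exact ⟨z, hz⟩
  have hmin : ∀ x, min (suppFnE A x) (suppFnE B x) = suppFnE (A ∩ B) x := by
    intro x
    apply le_antisymm
    · obtain ⟨z, hz, hle⟩ := key x
      exact hle.trans (le_suppFnE hI hIc hz x)
    · obtain ⟨m, hm, hval, _⟩ := suppFnE_exists_max hI hIc x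
      rw [hval]
      exact le_min (le_suppFnE hA hAc hm.1 x) (le_suppFnE hB hBc hm.2 x)
  refine ⟨?_, ?_, ?_, hmin⟩
  · exact (suppFnE_convexOn hA hAc).sup (suppFnE_convexOn hB hBc)
  · intro c x hc
    rw [suppFnE_smul hA hAc hc, suppFnE_smul hB hBc hc, mul_max_of_nonneg _ _ hc.le]
  · have : (fun x => min (suppFnE A x) (suppFnE B x)) = suppFnE (A ∩ B) := funext hmin
    rw [this]
    exact suppFnE_convexOn hI hIc
end
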